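/- With T compact metric, X a Hilbert space, and H(μ) = ∑_{i=1}^M R_i ∘ ω_i(μ) the Markov-type operator, H is continuous on cabv(X) equipped with the Monge–Kantorovich norm ‖μ‖_MK = sup{ |∫ f dμ| : f ∈ Lip(T,X), ‖f‖_∞ + ‖f‖_L ≤ 1 }, and ‖H(μ)‖_MK ≤ (∑_{i=1}^M ‖R_i‖(1 + r_i)) ‖μ‖_MK for all μ ∈ cabv(X). -/

import Mathlib

open MeasureTheory Filter Topology Set

noncomputable section

/-- A finite Borel partition of the whole space. -/
def IsBorelPartition {T : Type*} [MeasurableSpace T] (P : Finset (Set T)) : Prop :=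
  (∀ A ∈ P, MeasurableSet A) ∧ ((P : Set (Set T)).PairwiseDisjoint id) ∧
    ⋃₀ (P : Set (Set T)) = Set.univ

/-- Total variation of a vector measure, as an extended real. -/
def evar {T X : Type*} [MeasurableSpace T] [NormedAddCommGroup X]
    (μ : VectorMeasure T X) : ENNReal :=
  ⨆ (P : Finset (Set T)) (_ : IsBorelPartition P), ∑ A ∈ P, (‖μ A‖₊ : ENNReal)

/-- Bounded variation. -/
def BddVar {T X : Type*} [MeasurableSpace T] [NormedAddCommGroup X]
    (μ : VectorMeasure T X) : Prop := evar μ ≠ ⊤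

/-- The variational norm. -/
def varNorm {T X : Type*} [MeasurableSpace T] [NormedAddCommGroup X]
    (μ : VectorMeasure T X) : ℝ := (evar μ).toReal

/-- Composition of a bounded operator with a vector measure. -/
def opComp {T X Y 𝕜 : Type*} [MeasurableSpace T] [NontriviallyNormedField 𝕜]
    [NormedAddCommGroup X] [NormedSpace 𝕜 X] [NormedAddCommGroup Y] [NormedSpace 𝕜 Y]
    (R : X →L[𝕜] Y) (μ : VectorMeasure T X) : VectorMeasure T Y :=
  μ.mapRange R.toLinearMap.toAddMonoidHom R.continuous

/-- The Markov-type operator generated by operators `R i` and maps `ω i`. -/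
def markovH {T X 𝕜 : Type*} [MeasurableSpace T] [NontriviallyNormedField 𝕜]
    [NormedAddCommGroup X] [NormedSpace 𝕜 X] {M : ℕ}
    (R : Fin M → X →L[𝕜] X) (ω : Fin M → T → T) (μ : VectorMeasure T X) :
    VectorMeasure T X :=
  ∑ i, opComp (R i) (μ.map (ω i))

/-- Simple (finitely-valued, measurable) function. -/
def IsSimpleFn {T X : Type*} [MeasurableSpace T] (g : T → X) : Prop :=
  (Set.range g).Finite ∧ ∀ x : X, MeasurableSet (g ⁻¹' {x})

/-- Integral of a simple function against a vector measure. -/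
def simpleIntegral (𝕜 : Type*) {T X : Type*} [RCLike 𝕜] [MeasurableSpace T]
    [NormedAddCommGroup X] [InnerProductSpace 𝕜 X] (μ : VectorMeasure T X) (g : T → X) : 𝕜 :=
  ∑ᶠ x : X, (inner 𝕜 x (μ (g ⁻¹' {x})) : 𝕜)

/-- `I` is the (uniform, sesquilinear) integral of `f` with respect to `μ`. -/
def HasUIntegral (𝕜 : Type*) {T X : Type*} [RCLike 𝕜] [MeasurableSpace T]
    [NormedAddCommGroup X] [InnerProductSpace 𝕜 X] (μ : VectorMeasure T X)
    (f : T → X) (I : 𝕜) : Prop :=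
  ∀ g : ℕ → T → X, (∀ n, IsSimpleFn (g n)) → TendstoUniformly g f atTop →
    Tendsto (fun n => simpleIntegral 𝕜 μ (g n)) atTop (nhds I)

/-- The uniform integral (defaulting to `0` when it does not exist). -/
def uIntegral (𝕜 : Type*) {T X : Type*} [RCLike 𝕜] [MeasurableSpace T]
    [NormedAddCommGroup X] [InnerProductSpace 𝕜 X] (μ : VectorMeasure T X) (f : T → X) : 𝕜 :=
  letI := Classical.propDecidable
  if h : ∃ I, HasUIntegral 𝕜 μ f I then h.choose else 0

/-- The Monge–Kantorovich norm. -/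
def mkNorm (𝕜 : Type*) {T X : Type*} [RCLike 𝕜] [PseudoMetricSpace T] [MeasurableSpace T]
    [NormedAddCommGroup X] [InnerProductSpace 𝕜 X] (μ : VectorMeasure T X) : ℝ :=
  sSup {s | ∃ (f : T → X) (L : NNReal), LipschitzWith L f ∧ (∀ t, ‖f t‖ + (L : ℝ) ≤ 1) ∧
    s = ‖uIntegral 𝕜 μ f‖}

/-- The modified Monge–Kantorovich norm. -/
def mkNormStar (𝕜 : Type*) {T X : Type*} [RCLike 𝕜] [PseudoMetricSpace T] [MeasurableSpace T]
    [NormedAddCommGroup X] [InnerProductSpace 𝕜 X] (μ : VectorMeasure T X) : ℝ :=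
  sSup {s | ∃ f : T → X, LipschitzWith 1 f ∧ s = ‖uIntegral 𝕜 μ f‖}

/-- The `X`-valued Dirac measure `B ↦ δ_t(B) • x`. -/
def diracVM {T : Type*} [MeasurableSpace T] {𝕜 X : Type*} [RCLike 𝕜]
    [NormedAddCommGroup X] [NormedSpace 𝕜 X] (t : T) (x : X) : VectorMeasure T X :=
  ((Measure.dirac t).toSignedMeasure).mapRange
    { toFun := fun c : ℝ => (c : 𝕜) • x
      map_zero' := by simp
      map_add' := fun a b => by push_cast; rw [add_smul] }
    (RCLike.continuous_ofReal.smul continuous_const)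

end


noncomputable section
set_option linter.unusedSectionVars false

section aux
variable {T : Type*} [MeasurableSpace T] {𝕜 X : Type*} [RCLike 𝕜]
  [NormedAddCommGroup X] [InnerProductSpace 𝕜 X]

lemma vm_biUnion {Y : Type*} (μ : VectorMeasure T X) (A : Y → Set T)
    (hA : ∀ y, MeasurableSet (A y))
    (hd : ∀ y z, y ≠ z → Disjoint (A y) (A z)) :
    ∀ F : Finset Y, μ (⋃ y ∈ F, A y) = ∑ y ∈ F, μ (A y) := by
  classical
  intro F
  induction F using Finset.induction_on with
  | empty => simp
  | @insert a s ha ih =>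
    rw [Finset.set_biUnion_insert, Finset.sum_insert ha,
      VectorMeasure.of_union ?_ (hA a) (s.measurableSet_biUnion fun y _ => hA y),
      ih]
    simp only [Set.disjoint_iUnion_right]
    exact fun y hy => hd a y (fun h => ha (h ▸ hy))

lemma simple_preimage {Y : Type*} {k : T → Y} (hfin : (Set.range k).Finite)
    (hfib : ∀ y, MeasurableSet (k ⁻¹' {y})) (B : Set Y) : MeasurableSet (k ⁻¹' B) := by
  classical
  have : k ⁻¹' B = ⋃ y ∈ hfin.toFinset.filter (· ∈ B), k ⁻¹' {y} := by
    ext t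
    simp only [mem_preimage, Set.mem_iUnion, Finset.mem_filter, Set.Finite.mem_toFinset,
      mem_singleton_iff, exists_prop]
    exact ⟨fun h => ⟨k t, ⟨⟨t, rfl⟩, h⟩, rfl⟩, by rintro ⟨y, ⟨-, hy⟩, rfl⟩; exact hy⟩
  rw [this]
  exact (hfin.toFinset.filter (· ∈ B)).measurableSet_biUnion fun y _ => hfib y

lemma isSimpleFn_comp {Y : Type*} {k : T → Y} (hfin : (Set.range k).Finite)
    (hfib : ∀ y, MeasurableSet (k ⁻¹' {y})) (φ : Y → X) : IsSimpleFn (φ ∘ k) :=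
  ⟨(hfin.image φ).subset (by rw [Set.range_comp]),
   fun x => simple_preimage hfin hfib (φ ⁻¹' {x})⟩

lemma fib_empty {Y : Type*} {k : T → Y} (hfin : (Set.range k).Finite) {y : Y}
    (hy : y ∉ hfin.toFinset) : k ⁻¹' {y} = ∅ := by
  ext t
  simp only [mem_preimage, mem_singleton_iff, mem_empty_iff_false, iff_false]
  exact fun h => hy (hfin.mem_toFinset.2 ⟨t, h⟩)

lemma simpleIntegral_comp {Y : Type*} (μ : VectorMeasure T X) {k : T → Y}
    (hfin : (Set.range k).Finite) (hfib : ∀ y, MeasurableSet (k ⁻¹' {y})) (φ : Y → X) :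
    simpleIntegral 𝕜 μ (φ ∘ k) = ∑ᶠ y, (inner 𝕜 (φ y) (μ (k ⁻¹' {y})) : 𝕜) := by
  classical
  set S := hfin.toFinset with hS
  have hSmem : ∀ t, k t ∈ S := fun t => hfin.mem_toFinset.2 ⟨t, rfl⟩
  have hR : ∑ᶠ y, (inner 𝕜 (φ y) (μ (k ⁻¹' {y})) : 𝕜) = ∑ y ∈ S, (inner 𝕜 (φ y) (μ (k ⁻¹' {y})) : 𝕜) := by
    apply finsum_eq_sum_of_support_subset
    intro y hy
    by_contra h
    rw [Function.mem_support, fib_empty hfin h, VectorMeasure.empty, inner_zero_right] at hy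
    exact hy rfl
  have hpre : ∀ x : X, (φ ∘ k) ⁻¹' {x} = ⋃ y ∈ S.filter (fun y => φ y = x), k ⁻¹' {y} := by
    intro x; ext t
    simp only [mem_preimage, Function.comp_apply, mem_singleton_iff, Set.mem_iUnion,
      Finset.mem_filter, exists_prop]
    constructor
    · intro h; exact ⟨k t, ⟨hSmem t, h⟩, rfl⟩
    · rintro ⟨y, ⟨-, hy⟩, (h : k t = y)⟩; rw [h]; exact hy
  have hL : simpleIntegral 𝕜 μ (φ ∘ k) = ∑ x ∈ S.image φ, (inner 𝕜 x (μ ((φ ∘ k) ⁻¹' {x})) : 𝕜) := by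
    apply finsum_eq_sum_of_support_subset
    intro x hx
    by_contra h
    have hemp : (φ ∘ k) ⁻¹' {x} = ∅ := by
      ext t
      simp only [mem_preimage, Function.comp_apply, mem_singleton_iff, mem_empty_iff_false,
        iff_false]
      exact fun ht => h (Finset.mem_image.2 ⟨k t, hSmem t, ht⟩)
    rw [Function.mem_support, hemp, VectorMeasure.empty, inner_zero_right] at hx
    exact hx rfl
  rw [hL, hR]
  rw [← Finset.sum_fiberwise_of_maps_to (fun y hy => Finset.mem_image_of_mem φ hy)
    (fun y => (inner 𝕜 (φ y) (μ (k ⁻¹' {y})) : 𝕜))]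
  apply Finset.sum_congr rfl
  intro x hx
  rw [hpre x, vm_biUnion μ _ hfib (fun y z hyz => by
      refine Set.disjoint_left.2 fun t hty htz => hyz ?_
      rw [← hty.out, ← htz.out] ) _, inner_sum]
  apply Finset.sum_congr rfl
  intro y hy
  rw [(Finset.mem_filter.1 hy).2]

end aux

section aux2
variable {T : Type*} [MeasurableSpace T] {𝕜 X : Type*} [RCLike 𝕜]
  [NormedAddCommGroup X] [InnerProductSpace 𝕜 X]

lemma varNorm_nonneg (μ : VectorMeasure T X) : 0 ≤ varNorm μ := ENNReal.toReal_nonneg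

lemma inner_supp {Y : Type*} (μ : VectorMeasure T X) {k : T → Y}
    (hfin : (Set.range k).Finite) (φ : Y → X) :
    (Function.support fun y => (inner 𝕜 (φ y) (μ (k ⁻¹' {y})) : 𝕜)) ⊆ ↑hfin.toFinset := by
  intro y hy
  by_contra hc
  rw [Function.mem_support, fib_empty hfin hc, VectorMeasure.empty, inner_zero_right] at hy
  exact hy rfl

lemma sum_norm_fib_le {Y : Type*} (μ : VectorMeasure T X) (hμ : BddVar μ) {k : T → Y}
    (hfin : (Set.range k).Finite) (hfib : ∀ y, MeasurableSet (k ⁻¹' {y})) :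
    ∑ y ∈ hfin.toFinset, ‖μ (k ⁻¹' {y})‖ ≤ varNorm μ := by
  classical
  set S := hfin.toFinset with hS
  have hinj : Set.InjOn (fun y => k ⁻¹' {y}) S := by
    intro y hy z hz h
    have h' : k ⁻¹' {y} = k ⁻¹' {z} := h
    obtain ⟨t, ht⟩ := hfin.mem_toFinset.1 hy
    have htm : t ∈ k ⁻¹' {y} := by
      simp only [mem_preimage, mem_singleton_iff]; exact ht
    rw [h'] at htm
    simp only [mem_preimage, mem_singleton_iff] at htm
    rw [← ht, htm]
  set P : Finset (Set T) := S.image (fun y => k ⁻¹' {y}) with hP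
  have hmemP : ∀ A, A ∈ P ↔ ∃ y ∈ S, k ⁻¹' {y} = A := fun A => Finset.mem_image
  have hpart : IsBorelPartition P := by
    refine ⟨?_, ?_, ?_⟩
    · intro A hA
      obtain ⟨y, -, rfl⟩ := (hmemP A).1 hA
      exact hfib y
    · intro A hA B hB hAB
      obtain ⟨y, hy, rfl⟩ := (hmemP A).1 (Finset.mem_coe.1 hA)
      obtain ⟨z, hz, rfl⟩ := (hmemP B).1 (Finset.mem_coe.1 hB)
      refine Set.disjoint_left.2 fun t hty htz => hAB ?_
      replace hty : k t = y := hty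
      replace htz : k t = z := htz
      rw [← hty, ← htz]
    · apply Set.eq_univ_iff_forall.2
      intro t
      exact Set.mem_sUnion.2 ⟨k ⁻¹' {k t},
        Finset.mem_coe.2 ((hmemP _).2 ⟨k t, hfin.mem_toFinset.2 ⟨t, rfl⟩, rfl⟩), rfl⟩
  have h2 : (∑ A ∈ P, (‖μ A‖₊ : ENNReal)) ≤ evar μ :=
    le_iSup₂ (f := fun P (_ : IsBorelPartition P) => ∑ A ∈ P, (‖μ A‖₊ : ENNReal)) P hpart
  calc ∑ y ∈ S, ‖μ (k ⁻¹' {y})‖ = ∑ A ∈ P, ‖μ A‖ := by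
        rw [hP, Finset.sum_image (fun y hy z hz h => hinj hy hz h)]
    _ = (∑ A ∈ P, (‖μ A‖₊ : ENNReal)).toReal := by
        rw [ENNReal.toReal_sum (fun A _ => ENNReal.coe_ne_top)]
        simp [coe_nnnorm]
    _ ≤ (evar μ).toReal := ENNReal.toReal_mono hμ h2
    _ = varNorm μ := rfl

lemma simpleIntegral_sub_bound (μ : VectorMeasure T X) (hμ : BddVar μ) {h h' : T → X}
    (hh : IsSimpleFn h) (hh' : IsSimpleFn h') {ε : ℝ} (hε : 0 ≤ ε)
    (hb : ∀ t, ‖h t - h' t‖ ≤ ε) :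
    ‖simpleIntegral 𝕜 μ h - simpleIntegral 𝕜 μ h'‖ ≤ ε * varNorm μ := by
  classical
  set k : T → X × X := fun t => (h t, h' t) with hk
  have hfin : (Set.range k).Finite := by
    apply (hh.1.prod hh'.1).subset
    rintro _ ⟨t, rfl⟩
    exact ⟨⟨t, rfl⟩, ⟨t, rfl⟩⟩
  have hfib : ∀ p : X × X, MeasurableSet (k ⁻¹' {p}) := by
    intro p
    have : k ⁻¹' {p} = h ⁻¹' {p.1} ∩ h' ⁻¹' {p.2} := by
      ext t; simp [hk, Prod.ext_iff]
    rw [this]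
    exact (hh.2 _).inter (hh'.2 _)
  have e1 : simpleIntegral 𝕜 μ h = ∑ᶠ p : X × X, (inner 𝕜 p.1 (μ (k ⁻¹' {p})) : 𝕜) :=
    simpleIntegral_comp μ hfin hfib Prod.fst
  have e2 : simpleIntegral 𝕜 μ h' = ∑ᶠ p : X × X, (inner 𝕜 p.2 (μ (k ⁻¹' {p})) : 𝕜) :=
    simpleIntegral_comp μ hfin hfib Prod.snd
  have hfs1 := (hfin.toFinset.finite_toSet.subset (inner_supp (𝕜 := 𝕜) μ hfin Prod.fst))
  have hfs2 := (hfin.toFinset.finite_toSet.subset (inner_supp (𝕜 := 𝕜) μ hfin Prod.snd))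
  rw [e1, e2, ← finsum_sub_distrib hfs1 hfs2]
  have hsub : (Function.support fun p : X × X =>
      (inner 𝕜 p.1 (μ (k ⁻¹' {p})) : 𝕜) - (inner 𝕜 p.2 (μ (k ⁻¹' {p})) : 𝕜)) ⊆ ↑hfin.toFinset := by
    intro p hp
    by_contra hc
    rw [Function.mem_support, fib_empty hfin hc, VectorMeasure.empty, inner_zero_right,
      inner_zero_right, sub_zero] at hp
    exact hp rfl
  rw [finsum_eq_sum_of_support_subset _ hsub]
  calc ‖∑ p ∈ hfin.toFinset, ((inner 𝕜 p.1 (μ (k ⁻¹' {p})) : 𝕜) - (inner 𝕜 p.2 (μ (k ⁻¹' {p})) : 𝕜))‖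
      ≤ ∑ p ∈ hfin.toFinset, ‖(inner 𝕜 p.1 (μ (k ⁻¹' {p})) : 𝕜) - (inner 𝕜 p.2 (μ (k ⁻¹' {p})) : 𝕜)‖ :=
        norm_sum_le _ _
    _ ≤ ∑ p ∈ hfin.toFinset, ε * ‖μ (k ⁻¹' {p})‖ := by
        apply Finset.sum_le_sum
        intro p hp
        rw [← inner_sub_left]
        calc ‖(inner 𝕜 (p.1 - p.2) (μ (k ⁻¹' {p})) : 𝕜)‖ ≤ ‖p.1 - p.2‖ * ‖μ (k ⁻¹' {p})‖ :=
              norm_inner_le_norm _ _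
          _ ≤ ε * ‖μ (k ⁻¹' {p})‖ := by
              apply mul_le_mul_of_nonneg_right _ (norm_nonneg _)
              obtain ⟨t, ht⟩ := hfin.mem_toFinset.1 hp
              have : p.1 - p.2 = h t - h' t := by rw [← ht]
              rw [this]
              exact hb t
    _ = ε * ∑ p ∈ hfin.toFinset, ‖μ (k ⁻¹' {p})‖ := by rw [Finset.mul_sum]
    _ ≤ ε * varNorm μ := mul_le_mul_of_nonneg_left (sum_norm_fib_le μ hμ hfin hfib) hε

lemma isSimpleFn_const (x : X) : IsSimpleFn (fun _ : T => x) := by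
  constructor
  · exact (Set.finite_singleton x).subset (by rintro _ ⟨t, rfl⟩; exact rfl)
  · intro y
    by_cases hxy : x = y
    · have : (fun _ : T => x) ⁻¹' {y} = Set.univ := by ext t; simp [hxy]
      rw [this]; exact MeasurableSet.univ
    · have : (fun _ : T => x) ⁻¹' {y} = ∅ := by ext t; simp [hxy]
      rw [this]; exact MeasurableSet.empty

lemma simpleIntegral_zero_fn (μ : VectorMeasure T X) :
    simpleIntegral 𝕜 μ (fun _ => (0 : X)) = 0 := by
  have : ∀ x : X, (inner 𝕜 x (μ ((fun _ : T => (0:X)) ⁻¹' {x})) : 𝕜) = 0 := by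
    intro x
    by_cases hx : x = 0
    · rw [hx, inner_zero_left]
    · have : (fun _ : T => (0:X)) ⁻¹' {x} = ∅ := by ext t; simp [Ne.symm hx]
      rw [this, VectorMeasure.empty, inner_zero_right]
  rw [simpleIntegral]
  simp only [this, finsum_zero]

lemma norm_simpleIntegral_le (μ : VectorMeasure T X) (hμ : BddVar μ) {h : T → X}
    (hh : IsSimpleFn h) {B : ℝ} (hB : 0 ≤ B) (hb : ∀ t, ‖h t‖ ≤ B) :
    ‖simpleIntegral 𝕜 μ h‖ ≤ B * varNorm μ := by
  have := simpleIntegral_sub_bound (𝕜 := 𝕜) μ hμ hh (isSimpleFn_const 0) hB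
    (fun t => by simpa using hb t)
  rwa [simpleIntegral_zero_fn, sub_zero] at this

lemma simpleIntegral_smul (μ : VectorMeasure T X) (c : 𝕜) {h : T → X} (hh : IsSimpleFn h) :
    simpleIntegral 𝕜 μ (fun t => c • h t) = (starRingEnd 𝕜) c * simpleIntegral 𝕜 μ h := by
  have e1 : simpleIntegral 𝕜 μ ((fun x => c • x) ∘ h)
      = ∑ᶠ x, (inner 𝕜 (c • x) (μ (h ⁻¹' {x})) : 𝕜) := simpleIntegral_comp μ hh.1 hh.2 _
  have e2 : simpleIntegral 𝕜 μ (fun t => c • h t) = simpleIntegral 𝕜 μ ((fun x => c • x) ∘ h) :=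
    rfl
  rw [e2, e1]
  have supp : (Function.support fun x => (inner 𝕜 x (μ (h ⁻¹' {x})) : 𝕜)).Finite :=
    hh.1.toFinset.finite_toSet.subset (inner_supp (𝕜 := 𝕜) μ hh.1 id)
  rw [simpleIntegral, mul_finsum' _ _ supp]
  apply finsum_congr
  intro x
  rw [inner_smul_left]

end aux2

section aux3
variable {T : Type*} [MeasurableSpace T] {𝕜 X : Type*} [RCLike 𝕜]
  [NormedAddCommGroup X] [InnerProductSpace 𝕜 X] [CompleteSpace X]

lemma vm_finset_sum_apply {ι : Type*} (F : Finset ι) (ν : ι → VectorMeasure T X) (A : Set T) :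
    (∑ i ∈ F, ν i) A = ∑ i ∈ F, ν i A := by
  classical
  induction F using Finset.induction_on with
  | empty => simp
  | @insert a s ha ih => rw [Finset.sum_insert ha, Finset.sum_insert ha,
      VectorMeasure.add_apply, ih]

lemma tuple_fin {M : ℕ} (ω : Fin M → T → T) {h : T → X} (hh : IsSimpleFn h) :
    (Set.range (fun t => (fun i => h (ω i t)) : T → (Fin M → X))).Finite := by
  apply (Set.Finite.pi (fun _ : Fin M => hh.1)).subset
  rintro _ ⟨t, rfl⟩
  exact fun i _ => ⟨ω i t, rfl⟩

lemma tuple_fib {M : ℕ} (ω : Fin M → T → T) (hωm : ∀ i, Measurable (ω i))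
    {h : T → X} (hh : IsSimpleFn h) (v : Fin M → X) :
    MeasurableSet ((fun t => (fun i => h (ω i t)) : T → (Fin M → X)) ⁻¹' {v}) := by
  have : ((fun t => (fun i => h (ω i t)) : T → (Fin M → X)) ⁻¹' {v})
      = ⋂ i, ω i ⁻¹' (h ⁻¹' {v i}) := by
    ext t
    simp only [mem_preimage, mem_singleton_iff, Set.mem_iInter, funext_iff]
  rw [this]
  exact MeasurableSet.iInter fun i => (hωm i) (hh.2 (v i))

lemma isSimpleFn_transform {M : ℕ} (R : Fin M → X →L[𝕜] X) (ω : Fin M → T → T)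
    (hωm : ∀ i, Measurable (ω i)) (c : 𝕜) {h : T → X} (hh : IsSimpleFn h) :
    IsSimpleFn (fun t => c • ∑ i, ContinuousLinearMap.adjoint (R i) (h (ω i t))) :=
  isSimpleFn_comp (tuple_fin ω hh) (tuple_fib ω hωm hh)
    (fun v => c • ∑ i, ContinuousLinearMap.adjoint (R i) (v i))

lemma simpleIntegral_markovH {M : ℕ} (R : Fin M → X →L[𝕜] X) (ω : Fin M → T → T)
    (hωm : ∀ i, Measurable (ω i)) (μ : VectorMeasure T X) {h : T → X} (hh : IsSimpleFn h) :
    simpleIntegral 𝕜 (markovH R ω μ) h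
      = simpleIntegral 𝕜 μ (fun t => ∑ i, ContinuousLinearMap.adjoint (R i) (h (ω i t))) := by
  classical
  set S := hh.1.toFinset with hS
  -- step a: split over i
  have stepa : simpleIntegral 𝕜 (markovH R ω μ) h
      = ∑ i, simpleIntegral 𝕜 (opComp (R i) (μ.map (ω i))) h := by
    rw [simpleIntegral]
    have supp : (Function.support fun x => (inner 𝕜 x ((markovH R ω μ) (h ⁻¹' {x})) : 𝕜)) ⊆ ↑S := by
      intro x hx
      by_contra hc
      rw [Function.mem_support, fib_empty hh.1 hc, VectorMeasure.empty, inner_zero_right] at hx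
      exact hx rfl
    rw [finsum_eq_sum_of_support_subset _ supp]
    have : ∀ x ∈ S, (inner 𝕜 x ((markovH R ω μ) (h ⁻¹' {x})) : 𝕜)
        = ∑ i, (inner 𝕜 x ((opComp (R i) (μ.map (ω i))) (h ⁻¹' {x})) : 𝕜) := by
      intro x _
      rw [markovH, vm_finset_sum_apply, inner_sum]
    rw [Finset.sum_congr rfl this, Finset.sum_comm]
    apply Finset.sum_congr rfl
    intro i _
    rw [simpleIntegral]
    symm
    apply finsum_eq_sum_of_support_subset
    intro x hx
    by_contra hc
    rw [Function.mem_support, fib_empty hh.1 hc, VectorMeasure.empty, inner_zero_right] at hx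
    exact hx rfl
  -- step b: per i change of variables
  have stepb : ∀ i, simpleIntegral 𝕜 (opComp (R i) (μ.map (ω i))) h
      = simpleIntegral 𝕜 μ (fun t => ContinuousLinearMap.adjoint (R i) (h (ω i t))) := by
    intro i
    have hfinc : (Set.range (h ∘ ω i)).Finite :=
      hh.1.subset (by rintro _ ⟨t, rfl⟩; exact ⟨ω i t, rfl⟩)
    have hfibc : ∀ x : X, MeasurableSet ((h ∘ ω i) ⁻¹' {x}) := by
      intro x
      rw [Set.preimage_comp]
      exact (hωm i) (hh.2 x)
    have e1 : simpleIntegral 𝕜 μ ((ContinuousLinearMap.adjoint (R i) : X → X) ∘ (h ∘ ω i))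
        = ∑ᶠ x, (inner 𝕜 (ContinuousLinearMap.adjoint (R i) x) (μ ((h ∘ ω i) ⁻¹' {x})) : 𝕜) :=
      simpleIntegral_comp μ hfinc hfibc _
    have e2 : simpleIntegral 𝕜 μ (fun t => ContinuousLinearMap.adjoint (R i) (h (ω i t)))
        = simpleIntegral 𝕜 μ ((ContinuousLinearMap.adjoint (R i) : X → X) ∘ (h ∘ ω i)) := rfl
    rw [e2, e1, simpleIntegral]
    apply finsum_congr
    intro x
    rw [ContinuousLinearMap.adjoint_inner_left]
    congr 1
    show (opComp (R i) (μ.map (ω i))) (h ⁻¹' {x}) = R i (μ ((h ∘ ω i) ⁻¹' {x}))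
    show R i ((μ.map (ω i)) (h ⁻¹' {x})) = _
    rw [VectorMeasure.map_apply μ (hωm i) (hh.2 x)]
    rfl
  -- step c: sum of functions
  have hfin := tuple_fin ω hh
  have hfib := tuple_fib ω hωm hh
  set k : T → (Fin M → X) := fun t => (fun i => h (ω i t)) with hk
  have stepc : simpleIntegral 𝕜 μ (fun t => ∑ i, ContinuousLinearMap.adjoint (R i) (h (ω i t)))
      = ∑ i, simpleIntegral 𝕜 μ (fun t => ContinuousLinearMap.adjoint (R i) (h (ω i t))) := by
    have e1 : simpleIntegral 𝕜 μ ((fun v => ∑ i, ContinuousLinearMap.adjoint (R i) (v i)) ∘ k)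
        = ∑ᶠ v, (inner 𝕜 (∑ i, ContinuousLinearMap.adjoint (R i) (v i)) (μ (k ⁻¹' {v})) : 𝕜) :=
      simpleIntegral_comp μ hfin hfib _
    have e2 : ∀ i, simpleIntegral 𝕜 μ ((fun v => ContinuousLinearMap.adjoint (R i) (v i)) ∘ k)
        = ∑ᶠ v, (inner 𝕜 (ContinuousLinearMap.adjoint (R i) (v i)) (μ (k ⁻¹' {v})) : 𝕜) :=
      fun i => simpleIntegral_comp μ hfin hfib _
    have e3 : simpleIntegral 𝕜 μ (fun t => ∑ i, ContinuousLinearMap.adjoint (R i) (h (ω i t)))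
        = simpleIntegral 𝕜 μ ((fun v => ∑ i, ContinuousLinearMap.adjoint (R i) (v i)) ∘ k) := rfl
    rw [e3, e1]
    have e4 : ∀ v : Fin M → X, (inner 𝕜 (∑ i, ContinuousLinearMap.adjoint (R i) (v i)) (μ (k ⁻¹' {v})) : 𝕜)
        = ∑ i, (inner 𝕜 (ContinuousLinearMap.adjoint (R i) (v i)) (μ (k ⁻¹' {v})) : 𝕜) :=
      fun v => sum_inner _ _ _
    rw [finsum_congr e4]
    rw [finsum_eq_sum_of_support_subset _ (s := hfin.toFinset) ?_]
    · rw [Finset.sum_comm]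
      apply Finset.sum_congr rfl
      intro i _
      have e5 : simpleIntegral 𝕜 μ (fun t => ContinuousLinearMap.adjoint (R i) (h (ω i t)))
          = simpleIntegral 𝕜 μ ((fun v => ContinuousLinearMap.adjoint (R i) (v i)) ∘ k) := rfl
      rw [e5, e2 i]
      symm
      apply finsum_eq_sum_of_support_subset
      exact inner_supp (𝕜 := 𝕜) μ hfin _
    · intro v hv
      by_contra hc
      rw [Function.mem_support, fib_empty hfin hc, VectorMeasure.empty] at hv
      simp only [inner_zero_right, Finset.sum_const_zero] at hv
      exact hv rfl
  rw [stepa, stepc]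
  exact Finset.sum_congr rfl (fun i _ => stepb i)

end aux3

section approx
variable {T : Type*} [MetricSpace T] [MeasurableSpace T] [BorelSpace T]
  {X : Type*} [NormedAddCommGroup X]

def approxFn (f : T → X) (r : ℝ) : List T → T → X
  | [] => fun _ => 0
  | c :: cs => fun t => if dist t c < r then f c else approxFn f r cs t

lemma approxFn_preimage (f : T → X) (r : ℝ) (l : List T) (B : Set X) :
    MeasurableSet (approxFn f r l ⁻¹' B) := by
  induction l with
  | nil =>
    by_cases h0 : (0 : X) ∈ B
    · have : approxFn f r [] ⁻¹' B = Set.univ := by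
        ext t; simp [approxFn, h0]
      rw [this]; exact MeasurableSet.univ
    · have : approxFn f r [] ⁻¹' B = ∅ := by
        ext t; simp [approxFn, h0]
      rw [this]; exact MeasurableSet.empty
  | cons c cs ih =>
    by_cases hc : f c ∈ B
    · have : approxFn f r (c :: cs) ⁻¹' B
          = Metric.ball c r ∪ ((Metric.ball c r)ᶜ ∩ approxFn f r cs ⁻¹' B) := by
        ext t
        by_cases h : dist t c < r <;>
          simp [approxFn, h, hc, Metric.mem_ball]
      rw [this]
      exact measurableSet_ball.union (measurableSet_ball.compl.inter ih)
    · have : approxFn f r (c :: cs) ⁻¹' B = (Metric.ball c r)ᶜ ∩ approxFn f r cs ⁻¹' B := by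
        ext t
        by_cases h : dist t c < r <;>
          simp [approxFn, h, hc, Metric.mem_ball]
      rw [this]
      exact measurableSet_ball.compl.inter ih

lemma approxFn_range (f : T → X) (r : ℝ) (l : List T) :
    (Set.range (approxFn f r l)).Finite := by
  induction l with
  | nil => exact (Set.finite_singleton 0).subset (by rintro _ ⟨t, rfl⟩; simp [approxFn])
  | cons c cs ih =>
    apply (ih.insert (f c)).subset
    rintro _ ⟨t, rfl⟩
    by_cases h : dist t c < r
    · simp [approxFn, h]
    · simp only [approxFn, h, if_false]
      exact Set.mem_insert_iff.2 (Or.inr ⟨t, rfl⟩)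

lemma approxFn_isSimpleFn (f : T → X) (r : ℝ) (l : List T) : IsSimpleFn (approxFn f r l) :=
  ⟨approxFn_range f r l, fun x => approxFn_preimage f r l {x}⟩

lemma approxFn_dist {L : NNReal} {f : T → X} (hf : LipschitzWith L f) {r : ℝ}
    (l : List T) (t : T) (hcov : ∃ c ∈ l, dist t c < r) :
    dist (approxFn f r l t) (f t) ≤ (L : ℝ) * r := by
  induction l with
  | nil => obtain ⟨c, hc, -⟩ := hcov; exact absurd hc List.not_mem_nil
  | cons c cs ih =>
    by_cases h : dist t c < r
    · have he : approxFn f r (c :: cs) t = f c := by simp [approxFn, h]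
      rw [he]
      calc dist (f c) (f t) ≤ (L : ℝ) * dist c t := hf.dist_le_mul c t
        _ ≤ (L : ℝ) * r := by
            apply mul_le_mul_of_nonneg_left _ L.coe_nonneg
            rw [dist_comm]; exact le_of_lt h
    · have he : approxFn f r (c :: cs) t = approxFn f r cs t := by simp [approxFn, h]
      rw [he]
      apply ih
      obtain ⟨c', hc', hd⟩ := hcov
      rcases List.mem_cons.1 hc' with rfl | hmem
      · exact absurd hd h
      · exact ⟨c', hmem, hd⟩

lemma exists_simple_approx [CompactSpace T] {f : T → X} {L : NNReal} (hf : LipschitzWith L f) :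
    ∃ g : ℕ → T → X, (∀ n, IsSimpleFn (g n)) ∧ TendstoUniformly g f atTop := by
  have hcov : ∀ n : ℕ, ∃ l : List T, ∀ t : T, ∃ c ∈ l, dist t c < 1 / (n + 1) := by
    intro n
    have h1 : (0 : ℝ) < 1 / (n + 1) := by positivity
    obtain ⟨s, -, hsfin, hscov⟩ := isCompact_univ.finite_cover_balls (X := T) h1
    refine ⟨hsfin.toFinset.toList, fun t => ?_⟩
    have := hscov (Set.mem_univ t)
    simp only [Set.mem_iUnion, exists_prop] at this
    obtain ⟨c, hc, hball⟩ := this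
    exact ⟨c, by simp [Finset.mem_toList, hsfin.mem_toFinset, hc],
      by rwa [Metric.mem_ball] at hball⟩
  choose l hl using hcov
  refine ⟨fun n => approxFn f (1 / (n + 1)) (l n), fun n => approxFn_isSimpleFn _ _ _, ?_⟩
  rw [Metric.tendstoUniformly_iff]
  intro ε hε
  have hlim : Tendsto (fun n : ℕ => (L : ℝ) * (1 / (n + 1))) atTop (𝓝 0) := by
    have := tendsto_one_div_add_atTop_nhds_zero_nat.const_mul (L : ℝ)
    simpa using this
  filter_upwards [hlim.eventually_lt_const hε] with n hn t
  calc dist (f t) (approxFn f (1 / (n + 1)) (l n) t)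
      = dist (approxFn f (1 / (n + 1)) (l n) t) (f t) := dist_comm _ _
    _ ≤ (L : ℝ) * (1 / (n + 1)) := approxFn_dist hf (l n) t (hl n t)
    _ < ε := hn

end approx

section aux5
variable {T : Type*} [MeasurableSpace T] {𝕜 X : Type*} [RCLike 𝕜]
  [NormedAddCommGroup X] [InnerProductSpace 𝕜 X]

/-- If the simple integrals along one reference approximating sequence converge,
then `f` has uniform integral equal to that limit. -/
lemma hasUIntegral_of_ref (μ : VectorMeasure T X) (hμ : BddVar μ) {f : T → X}
    {q : ℕ → T → X} (hq : ∀ n, IsSimpleFn (q n)) (hqf : TendstoUniformly q f atTop)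
    {I : 𝕜} (hqI : Tendsto (fun n => simpleIntegral 𝕜 μ (q n)) atTop (𝓝 I)) :
    HasUIntegral 𝕜 μ f I := by
  intro g hg hgf
  have hV : 0 ≤ varNorm μ := varNorm_nonneg μ
  have key : Tendsto (fun n => simpleIntegral 𝕜 μ (g n) - simpleIntegral 𝕜 μ (q n))
      atTop (𝓝 0) := by
    rw [NormedAddCommGroup.tendsto_nhds_zero]
    intro ε hε
    rw [Metric.tendstoUniformly_iff] at hgf hqf
    set V := varNorm μ with hVdef
    have hδpos : 0 < ε / (2 * (V + 1)) := by positivity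
    set δ := ε / (2 * (V + 1)) with hδ
    filter_upwards [hgf δ hδpos, hqf δ hδpos] with n h1 h2
    have hb : ∀ t, ‖g n t - q n t‖ ≤ 2 * δ := by
      intro t
      have := dist_triangle (g n t) (f t) (q n t)
      have e : ‖g n t - q n t‖ = dist (g n t) (q n t) := (dist_eq_norm _ _).symm
      rw [e]
      have h1t := h1 t
      have h2t := h2 t
      rw [dist_comm (f t) (g n t)] at h1t
      calc dist (g n t) (q n t) ≤ dist (g n t) (f t) + dist (f t) (q n t) := this
        _ ≤ δ + δ := add_le_add (le_of_lt h1t) (le_of_lt h2t)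
        _ = 2 * δ := by ring
    calc ‖simpleIntegral 𝕜 μ (g n) - simpleIntegral 𝕜 μ (q n)‖
        ≤ (2 * δ) * V := simpleIntegral_sub_bound μ hμ (hg n) (hq n) (by positivity) hb
      _ < ε := by
          rw [hδ]
          have hv1 : 0 < V + 1 := by linarith
          have key2 : 2 * (ε / (2 * (V + 1))) * V = ε * (V / (V + 1)) := by
            field_simp
          have hlt : V / (V + 1) < 1 := by rw [div_lt_one hv1]; linarith
          rw [key2]
          nlinarith
  have := key.add hqI
  simpa using this

end aux5

section aux6
variable {T : Type*} [MeasurableSpace T] {𝕜 X : Type*} [RCLike 𝕜]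
  [NormedAddCommGroup X] [InnerProductSpace 𝕜 X]

lemma uIntegral_eq (μ : VectorMeasure T X) {f : T → X}
    {q : ℕ → T → X} (hq : ∀ n, IsSimpleFn (q n)) (hqf : TendstoUniformly q f atTop)
    {I : 𝕜} (hI : HasUIntegral 𝕜 μ f I) : uIntegral 𝕜 μ f = I := by
  have hex : ∃ J, HasUIntegral 𝕜 μ f J := ⟨I, hI⟩
  have h1 : uIntegral 𝕜 μ f = hex.choose := by
    simp only [uIntegral]
    rw [dif_pos hex]
  rw [h1]
  exact tendsto_nhds_unique (hex.choose_spec q hq hqf) (hI q hq hqf)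

end aux6

section aux7
variable {T : Type*} [MetricSpace T] [CompactSpace T] [MeasurableSpace T] [BorelSpace T]
  {𝕜 X : Type*} [RCLike 𝕜] [NormedAddCommGroup X] [InnerProductSpace 𝕜 X]

lemma norm_uIntegral_le (μ : VectorMeasure T X) (hμ : BddVar μ) {f : T → X} {L : NNReal}
    (hf : LipschitzWith L f) {B : ℝ} (hB : 0 ≤ B) (hfB : ∀ t, ‖f t‖ ≤ B) :
    ‖uIntegral 𝕜 μ f‖ ≤ (B + 1) * varNorm μ := by
  have hV : 0 ≤ varNorm μ := varNorm_nonneg μ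
  by_cases hex : ∃ I, HasUIntegral 𝕜 μ f I
  · obtain ⟨g, hgs, hgf⟩ := exists_simple_approx hf
    have huI : uIntegral 𝕜 μ f = hex.choose := by
      simp only [uIntegral]; rw [dif_pos hex]
    have hlim := hex.choose_spec g hgs hgf
    rw [huI]
    apply le_of_tendsto hlim.norm
    rw [Metric.tendstoUniformly_iff] at hgf
    filter_upwards [hgf 1 one_pos] with n hn
    apply norm_simpleIntegral_le μ hμ (hgs n) (by positivity)
    intro t
    have h1 : ‖g n t - f t‖ < 1 := by
      have := hn t
      rw [dist_comm, dist_eq_norm] at this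
      exact this
    calc ‖g n t‖ = ‖f t + (g n t - f t)‖ := by congr 1; abel
      _ ≤ ‖f t‖ + ‖g n t - f t‖ := norm_add_le _ _
      _ ≤ B + 1 := add_le_add (hfB t) (le_of_lt h1)
  · simp only [uIntegral]
    rw [dif_neg hex]
    simp only [norm_zero]
    positivity

lemma mkNorm_nonneg (μ : VectorMeasure T X) : 0 ≤ mkNorm 𝕜 μ := by
  rw [mkNorm]
  apply Real.sSup_nonneg
  rintro s ⟨f, L, -, -, rfl⟩
  exact norm_nonneg _

lemma mkNorm_bddAbove (μ : VectorMeasure T X) (hμ : BddVar μ) :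
    BddAbove {s | ∃ (f : T → X) (L : NNReal), LipschitzWith L f ∧
      (∀ t, ‖f t‖ + (L : ℝ) ≤ 1) ∧ s = ‖uIntegral 𝕜 μ f‖} := by
  refine ⟨2 * varNorm μ, ?_⟩
  rintro s ⟨f, L, hf, hfb, rfl⟩
  have hfB : ∀ t, ‖f t‖ ≤ 1 := by
    intro t
    have := hfb t
    have hL : (0:ℝ) ≤ L := L.coe_nonneg
    linarith
  have := norm_uIntegral_le (𝕜 := 𝕜) μ hμ hf zero_le_one hfB
  linarith [this]

end aux7

section aux8
variable {T : Type*} [MeasurableSpace T] {𝕜 X : Type*} [RCLike 𝕜]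
  [NormedAddCommGroup X] [InnerProductSpace 𝕜 X] [CompleteSpace X]

lemma tendstoUniformly_transform {M : ℕ} (R : Fin M → X →L[𝕜] X) (ω : Fin M → T → T)
    (c : 𝕜) {g : ℕ → T → X} {f : T → X} (hg : TendstoUniformly g f atTop) :
    TendstoUniformly (fun n t => c • ∑ i, ContinuousLinearMap.adjoint (R i) (g n (ω i t)))
      (fun t => c • ∑ i, ContinuousLinearMap.adjoint (R i) (f (ω i t))) atTop := by
  rw [Metric.tendstoUniformly_iff] at hg ⊢
  intro ε hε
  set K : ℝ := ‖c‖ * ∑ i, ‖R i‖ with hK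
  have hK0 : 0 ≤ K := by positivity
  have hδ : 0 < ε / (K + 1) := by positivity
  filter_upwards [hg _ hδ] with n hn t
  have key : dist (c • ∑ i, ContinuousLinearMap.adjoint (R i) (f (ω i t)))
      (c • ∑ i, ContinuousLinearMap.adjoint (R i) (g n (ω i t))) ≤ K * (ε / (K + 1)) := by
    rw [dist_eq_norm, ← smul_sub, norm_smul, ← Finset.sum_sub_distrib]
    have h1 : ‖∑ i, (ContinuousLinearMap.adjoint (R i) (f (ω i t))
        - ContinuousLinearMap.adjoint (R i) (g n (ω i t)))‖
        ≤ ∑ i, ‖R i‖ * (ε / (K + 1)) := by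
      apply le_trans (norm_sum_le _ _)
      apply Finset.sum_le_sum
      intro i _
      rw [← map_sub]
      calc ‖ContinuousLinearMap.adjoint (R i) (f (ω i t) - g n (ω i t))‖
          ≤ ‖ContinuousLinearMap.adjoint (R i)‖ * ‖f (ω i t) - g n (ω i t)‖ :=
            ContinuousLinearMap.le_opNorm _ _
        _ ≤ ‖R i‖ * (ε / (K + 1)) := by
            rw [LinearIsometryEquiv.norm_map ContinuousLinearMap.adjoint (R i)]
            apply mul_le_mul_of_nonneg_left _ (norm_nonneg _)
            have := hn (ω i t)
            rw [dist_eq_norm] at this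
            exact le_of_lt this
    calc ‖c‖ * ‖∑ i, (ContinuousLinearMap.adjoint (R i) (f (ω i t))
          - ContinuousLinearMap.adjoint (R i) (g n (ω i t)))‖
        ≤ ‖c‖ * ∑ i, ‖R i‖ * (ε / (K + 1)) :=
          mul_le_mul_of_nonneg_left h1 (norm_nonneg c)
      _ = K * (ε / (K + 1)) := by rw [hK, ← Finset.sum_mul, mul_assoc]
  apply lt_of_le_of_lt key
  have h2 : K * (ε / (K + 1)) < (K + 1) * (ε / (K + 1)) :=
    mul_lt_mul_of_pos_right (lt_add_one K) hδ
  rw [mul_div_cancel₀ ε (by linarith : K + (1:ℝ) ≠ 0)] at h2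
  exact h2

end aux8


end


/-- the Markov-type operator is continuous for the Monge–Kantorovich norm:
`‖H(μ)‖_MK ≤ (∑ ‖R_i‖ (1 + r_i)) ‖μ‖_MK`. -/
theorem markovH_mkNorm_bound
    {T : Type*} [MetricSpace T] [CompactSpace T] [MeasurableSpace T] [BorelSpace T]
    {𝕜 X : Type*} [RCLike 𝕜] [NormedAddCommGroup X] [InnerProductSpace 𝕜 X] [CompleteSpace X]
    {M : ℕ} (ω : Fin M → T → T) (r : Fin M → NNReal)
    (hω : ∀ i, LipschitzWith (r i) (ω i)) (R : Fin M → X →L[𝕜] X)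
    (μ : VectorMeasure T X) (hμ : BddVar μ) :
    mkNorm 𝕜 (markovH R ω μ) ≤ (∑ i, ‖R i‖ * (1 + (r i : ℝ))) * mkNorm 𝕜 μ := by
  classical
  set C : ℝ := ∑ i, ‖R i‖ * (1 + (r i : ℝ)) with hCdef
  have hC0 : 0 ≤ C := Finset.sum_nonneg fun i _ => by positivity
  have hmk0 : 0 ≤ mkNorm 𝕜 μ := mkNorm_nonneg μ
  have hRHS : 0 ≤ C * mkNorm 𝕜 μ := mul_nonneg hC0 hmk0
  rw [mkNorm]
  apply Real.sSup_le _ hRHS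
  rintro s ⟨f, L, hf, hfb, rfl⟩
  by_cases hex : ∃ I, HasUIntegral 𝕜 (markovH R ω μ) f I
  swap
  · simp only [uIntegral]
    rw [dif_neg hex]
    simpa using hRHS
  have huI : uIntegral 𝕜 (markovH R ω μ) f = hex.choose := by
    simp only [uIntegral]; rw [dif_pos hex]
  set I := hex.choose with hIdef
  have hI : HasUIntegral 𝕜 (markovH R ω μ) f I := hex.choose_spec
  rw [huI]
  obtain ⟨g, hgs, hgf⟩ := exists_simple_approx hf
  have hlim : Tendsto (fun n => simpleIntegral 𝕜 (markovH R ω μ) (g n)) atTop (𝓝 I) :=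
    hI g hgs hgf
  have hωm : ∀ i, Measurable (ω i) := fun i => (hω i).continuous.measurable
  by_cases hCz : C = 0
  · -- degenerate case : all operators vanish
    have hsum0 : ∑ i, ‖R i‖ * (1 + (r i : ℝ)) = 0 := by rw [← hCdef]; exact hCz
    have hR0 : ∀ i : Fin M, R i = 0 := by
      intro i
      have hterm : ∀ j ∈ (Finset.univ : Finset (Fin M)), (0:ℝ) ≤ ‖R j‖ * (1 + (r j : ℝ)) :=
        fun j _ => by positivity
      have hz := (Finset.sum_eq_zero_iff_of_nonneg hterm).1 hsum0 i (Finset.mem_univ i)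
      have h1r : (0:ℝ) < 1 + (r i : ℝ) := by positivity
      rcases mul_eq_zero.1 hz with h | h
      · exact norm_eq_zero.1 h
      · exact absurd h (ne_of_gt h1r)
    have hH0 : markovH R ω μ = 0 := by
      rw [markovH]
      apply Finset.sum_eq_zero
      intro i _
      rw [hR0 i]
      apply VectorMeasure.ext
      intro s hs
      show (0 : X →L[𝕜] X) ((μ.map (ω i)) s) = _
      simp
    have hI0 : I = 0 := by
      have hz : ∀ n, simpleIntegral 𝕜 (markovH R ω μ) (g n) = 0 := by
        intro n
        rw [hH0, simpleIntegral]
        have : ∀ x : X, (inner 𝕜 x ((0 : VectorMeasure T X) ((g n) ⁻¹' {x})) : 𝕜) = 0 := by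
          intro x; rw [VectorMeasure.zero_apply, inner_zero_right]
        simp only [this, finsum_zero]
      apply tendsto_nhds_unique hlim
      simp only [hz]
      exact tendsto_const_nhds
    rw [hI0, norm_zero]
    exact hRHS
  have hCpos : 0 < C := lt_of_le_of_ne hC0 (Ne.symm hCz)
  set c : 𝕜 := ((C⁻¹ : ℝ) : 𝕜) with hc
  have hcnorm : ‖c‖ = C⁻¹ := by
    rw [hc, RCLike.norm_ofReal, abs_of_nonneg (inv_nonneg.2 hC0)]
  set Gf : T → X := fun t => ∑ i, ContinuousLinearMap.adjoint (R i) (f (ω i t)) with hGf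
  set f' : T → X := fun t => c • Gf t with hf'
  set q : ℕ → T → X :=
    fun n t => c • ∑ i, ContinuousLinearMap.adjoint (R i) (g n (ω i t)) with hq
  have hqs : ∀ n, IsSimpleFn (q n) := fun n => isSimpleFn_transform R ω hωm c (hgs n)
  have hquf : TendstoUniformly q f' atTop := tendstoUniformly_transform R ω c hgf
  have hqval : ∀ n, simpleIntegral 𝕜 μ (q n)
      = c * simpleIntegral 𝕜 (markovH R ω μ) (g n) := by
    intro n
    have h2 : IsSimpleFn (fun t => ∑ i, ContinuousLinearMap.adjoint (R i) (g n (ω i t))) :=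
      isSimpleFn_comp (tuple_fin ω (hgs n)) (tuple_fib ω hωm (hgs n))
        (fun v => ∑ i, ContinuousLinearMap.adjoint (R i) (v i))
    have h3 := simpleIntegral_smul μ c h2
    have h4 := simpleIntegral_markovH R ω hωm μ (hgs n)
    calc simpleIntegral 𝕜 μ (q n)
        = (starRingEnd 𝕜) c
          * simpleIntegral 𝕜 μ (fun t => ∑ i, ContinuousLinearMap.adjoint (R i) (g n (ω i t))) :=
          h3
      _ = c * simpleIntegral 𝕜 (markovH R ω μ) (g n) := by
          rw [hc, RCLike.conj_ofReal, h4]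
  have hqlim : Tendsto (fun n => simpleIntegral 𝕜 μ (q n)) atTop (𝓝 (c * I)) := by
    simp only [hqval]
    exact hlim.const_mul c
  have hf'I : HasUIntegral 𝕜 μ f' (c * I) := hasUIntegral_of_ref μ hμ hqs hquf hqlim
  have huf' : uIntegral 𝕜 μ f' = c * I := uIntegral_eq μ hqs hquf hf'I
  -- admissibility of f'
  set KR : ℝ := ∑ i, ‖R i‖ * ((L : ℝ) * (r i : ℝ)) with hKR
  have hKR0 : 0 ≤ KR := Finset.sum_nonneg fun i _ => by positivity
  set L' : NNReal := (C⁻¹ * KR).toNNReal with hL'def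
  have hL'coe : (L' : ℝ) = C⁻¹ * KR := Real.coe_toNNReal _ (by positivity)
  have hGfLip : ∀ s t : T, ‖Gf s - Gf t‖ ≤ KR * dist s t := by
    intro s t
    simp only [hGf]
    rw [← Finset.sum_sub_distrib]
    apply le_trans (norm_sum_le _ _)
    rw [hKR, Finset.sum_mul]
    apply Finset.sum_le_sum
    intro i _
    rw [← map_sub]
    have h5 : ‖f (ω i s) - f (ω i t)‖ ≤ (L : ℝ) * ((r i : ℝ) * dist s t) := by
      rw [← dist_eq_norm]
      calc dist (f (ω i s)) (f (ω i t)) ≤ (L : ℝ) * dist (ω i s) (ω i t) := hf.dist_le_mul _ _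
        _ ≤ (L : ℝ) * ((r i : ℝ) * dist s t) :=
            mul_le_mul_of_nonneg_left ((hω i).dist_le_mul s t) L.coe_nonneg
    calc ‖ContinuousLinearMap.adjoint (R i) (f (ω i s) - f (ω i t))‖
        ≤ ‖ContinuousLinearMap.adjoint (R i)‖ * ‖f (ω i s) - f (ω i t)‖ :=
          ContinuousLinearMap.le_opNorm _ _
      _ ≤ ‖R i‖ * ((L : ℝ) * ((r i : ℝ) * dist s t)) := by
          rw [LinearIsometryEquiv.norm_map ContinuousLinearMap.adjoint (R i)]
          exact mul_le_mul_of_nonneg_left h5 (norm_nonneg _)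
      _ = ‖R i‖ * ((L : ℝ) * (r i : ℝ)) * dist s t := by ring
  have hL' : LipschitzWith L' f' := by
    apply LipschitzWith.of_dist_le_mul
    intro s t
    rw [hL'coe, dist_eq_norm]
    have he : f' s - f' t = c • (Gf s - Gf t) := by simp only [hf', smul_sub]
    rw [he, norm_smul, hcnorm, mul_assoc]
    exact mul_le_mul_of_nonneg_left (hGfLip s t) (inv_nonneg.2 hC0)
  have hfb' : ∀ t, ‖f' t‖ + (L' : ℝ) ≤ 1 := by
    intro t
    have hL1 : (L : ℝ) ≤ 1 := by
      have := hfb t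
      linarith [norm_nonneg (f t)]
    have hGfb : ‖Gf t‖ ≤ ∑ i, ‖R i‖ * (1 - (L : ℝ)) := by
      simp only [hGf]
      apply le_trans (norm_sum_le _ _)
      apply Finset.sum_le_sum
      intro i _
      calc ‖ContinuousLinearMap.adjoint (R i) (f (ω i t))‖
          ≤ ‖ContinuousLinearMap.adjoint (R i)‖ * ‖f (ω i t)‖ :=
            ContinuousLinearMap.le_opNorm _ _
        _ ≤ ‖R i‖ * (1 - (L : ℝ)) := by
            rw [LinearIsometryEquiv.norm_map ContinuousLinearMap.adjoint (R i)]
            apply mul_le_mul_of_nonneg_left _ (norm_nonneg _)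
            have := hfb (ω i t)
            linarith
    have hsum : (∑ i, ‖R i‖ * (1 - (L : ℝ))) + KR ≤ C := by
      rw [hKR, hCdef, ← Finset.sum_add_distrib]
      apply Finset.sum_le_sum
      intro i _
      have h0R : (0:ℝ) ≤ ‖R i‖ := norm_nonneg _
      have h0r : (0:ℝ) ≤ (r i : ℝ) := (r i).coe_nonneg
      have h0L : (0:ℝ) ≤ (L : ℝ) := L.coe_nonneg
      have key : (0:ℝ) ≤ (r i : ℝ) * (1 - (L : ℝ)) + (L : ℝ) := by nlinarith
      nlinarith [mul_nonneg h0R key]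
    have hft : ‖f' t‖ ≤ C⁻¹ * ∑ i, ‖R i‖ * (1 - (L : ℝ)) := by
      have he : f' t = c • Gf t := rfl
      rw [he, norm_smul, hcnorm]
      exact mul_le_mul_of_nonneg_left hGfb (inv_nonneg.2 hC0)
    rw [hL'coe]
    calc ‖f' t‖ + C⁻¹ * KR ≤ C⁻¹ * (∑ i, ‖R i‖ * (1 - (L : ℝ))) + C⁻¹ * KR := by linarith
      _ = C⁻¹ * ((∑ i, ‖R i‖ * (1 - (L : ℝ))) + KR) := by ring
      _ ≤ C⁻¹ * C := mul_le_mul_of_nonneg_left hsum (inv_nonneg.2 hC0)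
      _ = 1 := inv_mul_cancel₀ (ne_of_gt hCpos)
  have hle : ‖uIntegral 𝕜 μ f'‖ ≤ mkNorm 𝕜 μ := by
    rw [mkNorm]
    exact le_csSup (mkNorm_bddAbove μ hμ) ⟨f', L', hL', hfb', rfl⟩
  have hnorm : ‖uIntegral 𝕜 μ f'‖ = C⁻¹ * ‖I‖ := by
    rw [huf', norm_mul, hcnorm]
  calc ‖I‖ = C * (C⁻¹ * ‖I‖) := by
        field_simp
    _ = C * ‖uIntegral 𝕜 μ f'‖ := by rw [hnorm]
    _ ≤ C * mkNorm 𝕜 μ := mul_le_mul_of_nonneg_left hle hC0
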